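/- Let d ≥ 2 and let f(X) = aX + b ∈ ℤ[X] be a linear polynomial. Then for every finite word w over {0,…,d−1}, the iterated section f|_w is a linear polynomial of the form aX + c with |c| ≤ max(|a|,|b|). Consequently the set of iterated sections {f|_w : w a finite word over {0,…,d−1}} is finite. -/

import Mathlib

open Polynomial

/-- The section of `f ∈ ℤ[X]` at a first-level vertex `x₀ ∈ {0, …, d-1}`:
`f|_{x₀}(X) = (f(x₀) div d) + ∑_{i=1}^{t} (f^{(i)}(x₀)/i!) d^{i-1} X^i`, where
`f^{(i)}/i!` is the `i`-th Hasse derivative and `div` is the quotient in division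
with remainder in `{0, …, d-1}` (Euclidean division). -/
noncomputable def psection (d : ℤ) (f : ℤ[X]) (x₀ : ℤ) : ℤ[X] :=
  C ((f.eval x₀).ediv d) +
    ∑ i ∈ Finset.Icc 1 f.natDegree, C ((Polynomial.hasseDeriv i f).eval x₀ * d ^ (i - 1)) * X ^ i

/-- Iterated section of `f` along a word `w = x₁ … x_n`: `f|_w = (…(f|_{x₁})|_{x₂} …)|_{x_n}`. -/
noncomputable def itSection (d : ℤ) (f : ℤ[X]) (w : List ℤ) : ℤ[X] :=
  w.foldl (psection d) f

lemma psection_linear (c a x₀ d : ℤ) :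
    psection d (C c + C a * X) x₀ = C ((c + a * x₀).ediv d) + C a * X := by
  by_cases ha : a = 0
  · subst ha; unfold psection; simp
  · unfold psection
    have h1 : (C c + C a * X).natDegree = 1 := by
      rw [add_comm]; exact natDegree_linear ha
    rw [h1, Finset.Icc_self, Finset.sum_singleton]
    simp [hasseDeriv_one]

lemma ediv_abs_bound (d : ℕ) (hd : 2 ≤ d) (M n : ℤ) (hn : |n| ≤ M * d) :
    |n.ediv d| ≤ M := by
  have hd' : (0:ℤ) < d := by exact_mod_cast Nat.lt_of_lt_of_le two_pos hd
  rw [abs_le] at hn ⊢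
  constructor
  · have h : (-M) * d ≤ n := by linarith [hn.1]
    have := Int.ediv_le_ediv hd' h
    rwa [Int.mul_ediv_cancel _ hd'.ne'] at this
  · have := Int.ediv_le_ediv hd' hn.2
    rwa [Int.mul_ediv_cancel _ hd'.ne'] at this

/-- A linear polynomial `f = a X + b` has finitely many iterated sections: each iterated
section is of the form `a X + c` with `|c| ≤ max |a| |b|`. -/
theorem linear_polynomial_finitely_many_sections (d : ℕ) (hd : 2 ≤ d) (a b : ℤ)
    (f : ℤ[X]) (hf : f = C b + C a * X) :
    (∀ w : List ℤ, (∀ x ∈ w, 0 ≤ x ∧ x < (d : ℤ)) →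
        ∃ c : ℤ, itSection d f w = C c + C a * X ∧ |c| ≤ max |a| |b|) ∧
    Set.Finite {g : ℤ[X] |
        ∃ w : List ℤ, (∀ x ∈ w, 0 ≤ x ∧ x < (d : ℤ)) ∧ g = itSection d f w} := by
  set M := max |a| |b| with hM
  have haM : |a| ≤ M := le_max_left _ _
  have key : ∀ w : List ℤ, (∀ x ∈ w, 0 ≤ x ∧ x < (d : ℤ)) → ∀ c : ℤ, |c| ≤ M →
      ∃ c' : ℤ, itSection d (C c + C a * X) w = C c' + C a * X ∧ |c'| ≤ M := by
    intro w
    induction w with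
    | nil => intro _ c hc; exact ⟨c, rfl, hc⟩
    | cons x w ih =>
      intro hw c hc
      have hx := hw x List.mem_cons_self
      have hstep : itSection d (C c + C a * X) (x :: w)
          = itSection d (C ((c + a * x).ediv d) + C a * X) w := by
        show itSection d (psection d (C c + C a * X) x) w = _
        rw [psection_linear]
      have hbound : |(c + a * x).ediv d| ≤ M := by
        apply ediv_abs_bound d hd
        have h1 : |c + a * x| ≤ |c| + |a| * x := by
          calc |c + a * x| ≤ |c| + |a * x| := abs_add_le _ _
          _ = |c| + |a| * x := by rw [abs_mul, abs_of_nonneg hx.1]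
        have h2 : |a| * x ≤ M * ((d:ℤ) - 1) := by
          have hx1 : x ≤ (d:ℤ) - 1 := by linarith [hx.2]
          nlinarith [hx.1, abs_nonneg a]
        nlinarith [hx.1]
      obtain ⟨c', h1, h2⟩ := ih (fun y hy => hw y (List.mem_cons_of_mem _ hy)) _ hbound
      exact ⟨c', hstep.trans h1, h2⟩
  have key' : ∀ w : List ℤ, (∀ x ∈ w, 0 ≤ x ∧ x < (d : ℤ)) →
      ∃ c : ℤ, itSection d f w = C c + C a * X ∧ |c| ≤ M := by
    intro w hw
    rw [hf]
    exact key w hw b (le_max_right _ _)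
  refine ⟨key', ?_⟩
  apply Set.Finite.subset (((Set.finite_Icc (-M) M).image (fun c => C c + C a * X)))
  rintro g ⟨w, hw, rfl⟩
  obtain ⟨c, h1, h2⟩ := key' w hw
  exact ⟨c, by rw [Set.mem_Icc, ← abs_le]; exact h2, h1.symm⟩
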